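/- arXiv:2005.11927 — 2 statements merged into one kernel-verified Lean document; each statement's English description precedes it below -/
import Mathlib

section
/- Define α_k for k ≥ 1 by α_1 = α_2 = 1, and for k ≥ 3, α_k = F_{k-2} + ∑_{i=1}^{⌊(k-1)/2⌋'} F_{2i-1} F_{k-2i} + ∑_{i} F_{2i} F_{k-(2i+1)} + F_{k-1}, where for odd k the first sum runs over 1 ≤ i ≤ (k-1)/2 and the second over 1 ≤ i ≤ (k-3)/2, and for even k both sums run over 1 ≤ i ≤ (k-2)/2. Then for all k ≥ 1, α_k ≤ α_{k+1}. -/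
/-- The absolute column sums of `C₁⁻²` from the paper. -/
def alpha (k : ℕ) : ℕ :=
  if k ≤ 2 then 1
  else
    Nat.fib (k - 2) +
      (if Odd k then
          ∑ i ∈ Finset.Icc 1 ((k - 1) / 2), Nat.fib (2 * i - 1) * Nat.fib (k - 2 * i) +
            ∑ i ∈ Finset.Icc 1 ((k - 3) / 2), Nat.fib (2 * i) * Nat.fib (k - (2 * i + 1))
        else
          ∑ i ∈ Finset.Icc 1 ((k - 2) / 2), Nat.fib (2 * i - 1) * Nat.fib (k - 2 * i) +
            ∑ i ∈ Finset.Icc 1 ((k - 2) / 2), Nat.fib (2 * i) * Nat.fib (k - (2 * i + 1))) +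
      Nat.fib (k - 1)

private lemma sum_le_sum_mono {a b c : ℕ} {f g : ℕ → ℕ} (hbc : b ≤ c)
    (hfg : ∀ i ∈ Finset.Icc a b, f i ≤ g i) :
    ∑ i ∈ Finset.Icc a b, f i ≤ ∑ i ∈ Finset.Icc a c, g i :=
  le_trans (Finset.sum_le_sum hfg)
    (Finset.sum_le_sum_of_subset (Finset.Icc_subset_Icc le_rfl hbc))

theorem alpha_monotone (k : ℕ) (hk : 1 ≤ k) : alpha k ≤ alpha (k + 1) := by
  match k, hk with
  | 1, _ => decide
  | 2, _ => decide
  | (n+3), _ =>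
    have h1 : ¬ (n+3 ≤ 2) := by omega
    have h2 : ¬ (n+3+1 ≤ 2) := by omega
    rcases Nat.even_or_odd (n+3) with he | ho
    · have ho' : Odd (n+3+1) := Even.add_one he
      have hne : ¬ Odd (n+3) := by simpa [Nat.not_odd_iff_even] using he
      obtain ⟨m, hm⟩ := id he
      simp only [alpha, h1, h2, hne, ho', if_true, if_false, ite_true, ite_false]
      refine add_le_add (add_le_add (Nat.fib_mono (by omega))
        (add_le_add ?_ ?_)) (Nat.fib_mono (by omega))
      · exact sum_le_sum_mono (by omega) fun i hi =>
          Nat.mul_le_mul_left _ (Nat.fib_mono (by omega))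
      · exact sum_le_sum_mono (by omega) fun i hi =>
          Nat.mul_le_mul_left _ (Nat.fib_mono (by omega))
    · have hne : ¬ Odd (n+3+1) := by
        simpa [Nat.not_odd_iff_even] using ho.add_one
      obtain ⟨m, hm⟩ := id ho
      simp only [alpha, h1, h2, hne, ho, if_true, if_false, ite_true, ite_false]
      refine add_le_add (add_le_add (Nat.fib_mono (by omega))
        (add_le_add ?_ ?_)) (Nat.fib_mono (by omega))
      · exact sum_le_sum_mono (by omega) fun i hi =>
          Nat.mul_le_mul_left _ (Nat.fib_mono (by omega))
      · exact sum_le_sum_mono (by omega) fun i hi =>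
          Nat.mul_le_mul_left _ (Nat.fib_mono (by omega))
end

section
/- The sum of all entries of the group inverse of the 6×6 matrix A with rows (1,0,1,1,0,0), (0,1,1,1,0,0), (0,0,1,0,1,1), (0,0,0,1,1,1), (0,0,0,0,0,0), (0,0,0,0,0,0) equals -12. -/
private lemma cv5 {α} (x : α) (u : Fin 5 → α) : Matrix.vecCons x u 5 = u 4 := rfl

private def A0 : Matrix (Fin 6) (Fin 6) ℚ :=
  !![1,0,1,1,0,0; 0,1,1,1,0,0; 0,0,1,0,1,1; 0,0,0,1,1,1; 0,0,0,0,0,0; 0,0,0,0,0,0]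

private def X0 : Matrix (Fin 6) (Fin 6) ℚ :=
  !![1,0,-1,-1,-4,-4; 0,1,-1,-1,-4,-4; 0,0,1,0,1,1; 0,0,0,1,1,1; 0,0,0,0,0,0; 0,0,0,0,0,0]

private def E0 : Matrix (Fin 6) (Fin 6) ℚ :=
  !![1,0,0,0,-2,-2; 0,1,0,0,-2,-2; 0,0,1,0,1,1; 0,0,0,1,1,1; 0,0,0,0,0,0; 0,0,0,0,0,0]

private lemma hAX : A0 * X0 = E0 := by
  ext i j
  fin_cases i <;> fin_cases j <;>
    norm_num [A0, X0, E0, Matrix.mul_apply, Fin.sum_univ_six, Matrix.vecHead, Matrix.vecTail, cv5, Matrix.cons_val_two, Matrix.cons_val_three, Matrix.cons_val_four]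

private lemma hXA : X0 * A0 = E0 := by
  ext i j
  fin_cases i <;> fin_cases j <;>
    norm_num [A0, X0, E0, Matrix.mul_apply, Fin.sum_univ_six, Matrix.vecHead, Matrix.vecTail, cv5, Matrix.cons_val_two, Matrix.cons_val_three, Matrix.cons_val_four]

private lemma hEA : E0 * A0 = A0 := by
  ext i j
  fin_cases i <;> fin_cases j <;>
    norm_num [A0, E0, Matrix.mul_apply, Fin.sum_univ_six, Matrix.vecHead, Matrix.vecTail, cv5, Matrix.cons_val_two, Matrix.cons_val_three, Matrix.cons_val_four]

private lemma hEX : E0 * X0 = X0 := by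
  ext i j
  fin_cases i <;> fin_cases j <;>
    norm_num [X0, E0, Matrix.mul_apply, Fin.sum_univ_six, Matrix.vecHead, Matrix.vecTail, cv5, Matrix.cons_val_two, Matrix.cons_val_three, Matrix.cons_val_four]

private lemma hA1 : A0 * X0 * A0 = A0 := by rw [hAX, hEA]
private lemma hA2 : X0 * A0 * X0 = X0 := by rw [hXA, hEX]
private lemma hA3 : A0 * X0 = X0 * A0 := by rw [hAX, hXA]

private lemma gi_unique {R : Type*} [Semigroup R] {a x y : R}
    (h2 : x * a * x = x) (h3 : a * x = x * a)
    (k1 : a * y * a = a) (k2 : y * a * y = y) (k3 : a * y = y * a)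
    (hEF : a * x = a * y) : x = y := by
  calc x = x * a * x := h2.symm
    _ = x * (a * x) := by rw [mul_assoc]
    _ = x * (a * y) := by rw [hEF]
    _ = x * a * y := by rw [mul_assoc]
    _ = a * x * y := by rw [h3]
    _ = a * y * y := by rw [hEF]
    _ = y * a * y := by rw [k3]
    _ = y := k2

private lemma gi_hEF {R : Type*} [Semigroup R] {a x y : R}
    (h1 : a * x * a = a) (h3 : a * x = x * a)
    (k1 : a * y * a = a) (k3 : a * y = y * a) : a * x = a * y := by
  calc a * x = x * a := h3
    _ = x * (a * y * a) := by rw [k1]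
    _ = (x * a) * (y * a) := by simp only [mul_assoc]
    _ = (a * x) * (a * y) := by rw [h3, k3]
    _ = a * x * a * y := by simp only [mul_assoc]
    _ = a * y := by rw [h1]

private lemma sumX0 : ∑ i, ∑ j, X0 i j = -12 := by
  norm_num [X0, Fin.sum_univ_six, Matrix.vecHead, Matrix.vecTail, cv5, Matrix.cons_val_two, Matrix.cons_val_three, Matrix.cons_val_four]

theorem sum_group_inverse_example :
    let A : Matrix (Fin 6) (Fin 6) ℚ :=
      !![1,0,1,1,0,0; 0,1,1,1,0,0; 0,0,1,0,1,1; 0,0,0,1,1,1; 0,0,0,0,0,0; 0,0,0,0,0,0]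
    ∀ X : Matrix (Fin 6) (Fin 6) ℚ,
      A * X * A = A → X * A * X = X → A * X = X * A →
        ∑ i, ∑ j, X i j = -12 := by
  intro A X h1 h2 h3
  have hAA0 : A = A0 := rfl
  rw [hAA0] at h1 h2 h3
  have hXX0 : X = X0 :=
    gi_unique h2 h3 hA1 hA2 hA3 (gi_hEF h1 h3 hA1 hA3)
  rw [hXX0]
  exact sumX0
end
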